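/- Let t1, t2 be nonzero real numbers and let z ∈ ℂ satisfy z ∉ Σ(t1,t2) := {E ∈ ℝ : | |t1| − |t2| | ≤ |E| ≤ |t1| + |t2|}. Let λ be the unique eigenvalue of the transfer matrix T(z) = [[−t1/t2, z/t2], [−z/t2, z²/(t1·t2) − t2/t1]] with |λ| < 1. If a sequence v : ℕ → ℂ² satisfies v_{m+1} = T(z)·v_m for all m ∈ ℕ and ∑_{m∈ℕ} ‖v_m‖² < ∞, then T(z)·v_0 = λ·v_0, i.e., v_0 lies in the eigenspace of T(z) for the eigenvalue λ. -/

import Mathlib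

open Matrix in
private lemma ssh_det_aux (t1 t2 : ℝ) (ht1' : (t1:ℂ) ≠ 0) (ht2' : (t2:ℂ) ≠ 0) (z : ℂ) :
    (-(t1 : ℂ) / t2) * (z ^ 2 / ((t1 : ℂ) * t2) - (t2 : ℂ) / t1) - (z / t2) * (-z / t2) = 1 := by
  field_simp
  ring_nf

open Matrix Polynomial in
private lemma ssh_char_aux (t1 t2 : ℝ) (ht1' : (t1:ℂ) ≠ 0) (ht2' : (t2:ℂ) ≠ 0) (z lam : ℂ)
    (hlam : (!![-(t1 : ℂ) / t2, z / t2;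
        -z / t2, z ^ 2 / ((t1 : ℂ) * t2) - (t2 : ℂ) / t1]).charpoly.IsRoot lam) :
    lam ^ 2 - (-(t1 : ℂ) / t2 + (z ^ 2 / ((t1 : ℂ) * t2) - (t2 : ℂ) / t1)) * lam + 1 = 0 := by
  have hdet1 := ssh_det_aux t1 t2 ht1' ht2' z
  rw [Matrix.charpoly, Matrix.det_fin_two] at hlam
  simp [Matrix.charmatrix_apply, Polynomial.IsRoot, Matrix.diagonal] at hlam
  linear_combination hlam - hdet1

open Matrix in
private lemma ssh_CH_aux (t1 t2 : ℝ) (ht1' : (t1:ℂ) ≠ 0) (ht2' : (t2:ℂ) ≠ 0) (z : ℂ)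
    (u : Fin 2 → ℂ) :
    (!![-(t1 : ℂ) / t2, z / t2;
        -z / t2, z ^ 2 / ((t1 : ℂ) * t2) - (t2 : ℂ) / t1]).mulVec
      ((!![-(t1 : ℂ) / t2, z / t2;
        -z / t2, z ^ 2 / ((t1 : ℂ) * t2) - (t2 : ℂ) / t1]).mulVec u)
    = (-(t1 : ℂ) / t2 + (z ^ 2 / ((t1 : ℂ) * t2) - (t2 : ℂ) / t1)) •
      (!![-(t1 : ℂ) / t2, z / t2;
        -z / t2, z ^ 2 / ((t1 : ℂ) * t2) - (t2 : ℂ) / t1]).mulVec u - u := by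
  have hdet1 := ssh_det_aux t1 t2 ht1' ht2' z
  funext i
  fin_cases i <;>
    simp [Matrix.mulVec, dotProduct, Fin.sum_univ_two, Matrix.vecHead, Matrix.vecTail]
  · linear_combination (-(u 0)) * hdet1
  · linear_combination (-(u 1)) * hdet1

open Matrix in
/-- For `z` outside the bulk SSH spectrum, if `λ` is the unique eigenvalue of the transfer
matrix `T(z)` with `|λ| < 1`, then any square-summable solution of `v_{m+1} = T(z) v_m` has
initial data `v_0` in the `λ`-eigenspace of `T(z)`. -/
theorem stmt_6 (t1 t2 : ℝ) (ht1 : t1 ≠ 0) (ht2 : t2 ≠ 0) (z : ℂ)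
    (hz : z ∉ {w : ℂ | ∃ E : ℝ, w = (E : ℂ) ∧
      |(|t1| - |t2|)| ≤ |E| ∧ |E| ≤ |t1| + |t2|})
    (lam : ℂ)
    (hlam : (!![-(t1 : ℂ) / t2, z / t2;
        -z / t2, z ^ 2 / ((t1 : ℂ) * t2) - (t2 : ℂ) / t1]).charpoly.IsRoot lam)
    (hlt : ‖lam‖ < 1)
    (huniq : ∀ mu : ℂ, (!![-(t1 : ℂ) / t2, z / t2;
        -z / t2, z ^ 2 / ((t1 : ℂ) * t2) - (t2 : ℂ) / t1]).charpoly.IsRoot mu →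
      ‖mu‖ < 1 → mu = lam)
    (v : ℕ → Fin 2 → ℂ)
    (hrec : ∀ m : ℕ, v (m + 1) = (!![-(t1 : ℂ) / t2, z / t2;
        -z / t2, z ^ 2 / ((t1 : ℂ) * t2) - (t2 : ℂ) / t1]).mulVec (v m))
    (hsum : Summable (fun m : ℕ => ‖v m 0‖ ^ 2 + ‖v m 1‖ ^ 2)) :
    (!![-(t1 : ℂ) / t2, z / t2;
        -z / t2, z ^ 2 / ((t1 : ℂ) * t2) - (t2 : ℂ) / t1]).mulVec (v 0) = lam • v 0 := by
  have ht1' : (t1 : ℂ) ≠ 0 := by exact_mod_cast ht1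
  have ht2' : (t2 : ℂ) ≠ 0 := by exact_mod_cast ht2
  set s : ℂ := -(t1 : ℂ) / t2 + (z ^ 2 / ((t1 : ℂ) * t2) - (t2 : ℂ) / t1) with hs
  have hlam' : lam ^ 2 - s * lam + 1 = 0 := ssh_char_aux t1 t2 ht1' ht2' z lam hlam
  set mu : ℂ := s - lam with hmu
  have hprod : lam * mu = 1 := by
    rw [hmu]; linear_combination -hlam'
  have hlam0 : lam ≠ 0 := by
    intro h; rw [h, zero_mul] at hprod; exact zero_ne_one hprod
  have habs : ‖lam‖ * ‖mu‖ = 1 := by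
    rw [← norm_mul, hprod]
    exact norm_one
  have hla_pos : 0 < ‖lam‖ := by
    simpa using norm_pos_iff.mpr hlam0
  have hmu_gt : 1 < ‖mu‖ := by nlinarith
  have hrec2 : ∀ m : ℕ, v (m + 2) = s • v (m + 1) - v m := by
    intro m
    have h2 : v (m + 2) = s • (!![-(t1 : ℂ) / t2, z / t2;
        -z / t2, z ^ 2 / ((t1 : ℂ) * t2) - (t2 : ℂ) / t1]).mulVec (v m) - v m := by
      rw [show m + 2 = (m + 1) + 1 from rfl, hrec (m + 1), hrec m]
      exact ssh_CH_aux t1 t2 ht1' ht2' z (v m)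
    rw [h2, ← hrec m]
  set w : ℕ → Fin 2 → ℂ := fun m => v (m + 1) - lam • v m with hw
  have hwstep : ∀ m : ℕ, w (m + 1) = mu • w m := by
    intro m
    funext i
    have h2 := congrFun (hrec2 m) i
    simp only [hw, Pi.sub_apply, Pi.smul_apply, smul_eq_mul, hmu] at *
    rw [h2]
    linear_combination -(v m i) * hlam'
  have hwpow : ∀ m : ℕ, w m = mu ^ m • w 0 := by
    intro m
    induction m with
    | zero => simp
    | succ n ih => rw [hwstep n, ih, smul_smul, pow_succ]; ring_nf
  have hvlim : ∀ i : Fin 2, Filter.Tendsto (fun m => ‖v m i‖) Filter.atTop (nhds 0) := by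
    intro i
    have hsq0 : Summable (fun m : ℕ => ‖v m 0‖ ^ 2) :=
      hsum.of_nonneg_of_le (fun m => by positivity)
        (fun m => le_add_of_nonneg_right (by positivity))
    have hsq1 : Summable (fun m : ℕ => ‖v m 1‖ ^ 2) :=
      hsum.of_nonneg_of_le (fun m => by positivity)
        (fun m => le_add_of_nonneg_left (by positivity))
    have hsq : Summable (fun m : ℕ => ‖v m i‖ ^ 2) := by
      fin_cases i
      · exact hsq0
      · exact hsq1
    have h0 : Filter.Tendsto (fun m => ‖v m i‖ ^ 2) Filter.atTop (nhds 0) :=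
      hsq.tendsto_atTop_zero
    have h1 := h0.sqrt
    simpa [Real.sqrt_sq (norm_nonneg _)] using h1
  have hw0 : w 0 = 0 := by
    funext i
    have hwlim : Filter.Tendsto (fun m => ‖w m i‖) Filter.atTop (nhds 0) := by
      have h1 : Filter.Tendsto (fun m => ‖v (m + 1) i‖ + ‖lam‖ * ‖v m i‖)
          Filter.atTop (nhds 0) := by
        have h2 := ((hvlim i).comp (Filter.tendsto_add_atTop_nat 1)).add
          (((hvlim i)).const_mul (‖lam‖))
        simpa using h2
      refine squeeze_zero (fun m => norm_nonneg _) (fun m => ?_) h1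
      have h3 : w m i = v (m + 1) i - lam * v m i := by simp [hw]
      rw [h3]
      calc ‖v (m + 1) i - lam * v m i‖ ≤ ‖v (m + 1) i‖ + ‖lam * v m i‖ := norm_sub_le _ _
        _ = ‖v (m + 1) i‖ + ‖lam‖ * ‖v m i‖ := by rw [norm_mul]
    have hge : ∀ m : ℕ, ‖w 0 i‖ ≤ ‖w m i‖ := by
      intro m
      have h4 := congrFun (hwpow m) i
      simp only [Pi.smul_apply, smul_eq_mul] at h4
      rw [h4, norm_mul, norm_pow]
      have h1 : (1 : ℝ) ≤ ‖mu‖ ^ m := by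
        have := pow_le_pow_left₀ zero_le_one (le_of_lt hmu_gt) m
        simpa using this
      nlinarith [norm_nonneg (w 0 i)]
    have h5 : ‖w 0 i‖ ≤ 0 := ge_of_tendsto hwlim (Filter.Eventually.of_forall hge)
    simpa using norm_le_zero_iff.mp h5
  have hv1 : v 1 = lam • v 0 := by
    have h6 := hw0
    simp only [hw] at h6
    exact sub_eq_zero.mp h6
  rw [← hrec 0]
  exact hv1
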